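/- Suppose φ is Sturmian and eventually periodic. Then every class of vertices is finite: for each vertex x, the set {y ∈ V(T) : y is in the same class as x} is finite. -/

import Mathlib

open SimpleGraph

/-- Equivalence of colored `n`-balls around `x` and `y`: a graph isomorphism between the
induced subgraphs on the balls, sending center to center and preserving the coloring. -/
def BallEquiv {V A : Type*} (T : SimpleGraph V) (φ : V → A) (n : ℕ) (x y : V) : Prop :=
  ∃ f : {v : V // T.dist x v ≤ n} ≃ {v : V // T.dist y v ≤ n},
    ((f ⟨x, by simp [SimpleGraph.dist_self]⟩ : {v : V // T.dist y v ≤ n}) : V) = y ∧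
    (∀ u w : {v : V // T.dist x v ≤ n}, T.Adj (u : V) (w : V) ↔ T.Adj (f u : V) (f w : V)) ∧
    ∀ v : {v : V // T.dist x v ≤ n}, φ (f v : V) = φ (v : V)

/-- Two vertices are in the same class if a color-preserving automorphism of `T`
sends one to the other. -/
def SameClass {V A : Type*} (T : SimpleGraph V) (φ : V → A) (x y : V) : Prop :=
  ∃ g : V ≃ V, (∀ u w : V, T.Adj (g u) (g w) ↔ T.Adj u w) ∧ g x = y ∧ ∀ v, φ (g v) = φ v

/-- Subword complexity: the number of equivalence classes of colored `n`-balls. -/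
noncomputable def ballComplexity {V A : Type*} (T : SimpleGraph V) (φ : V → A) (n : ℕ) : ℕ :=
  Nat.card (Quot (BallEquiv T φ n))

/-- A coloring is periodic if it is invariant under a subgroup of the automorphism group
of `T` having finitely many orbits on vertices. -/
def IsPeriodicColoring {V A : Type*} (T : SimpleGraph V) (φ : V → A) : Prop :=
  ∃ Γ : Subgroup (Equiv.Perm V),
    (∀ γ ∈ Γ, ∀ u w : V, T.Adj (γ u) (γ w) ↔ T.Adj u w) ∧
    (∀ γ ∈ Γ, ∀ v, φ (γ v) = φ v) ∧
    Finite (Quot (fun x y : V => ∃ γ ∈ Γ, γ x = y))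

/-- The colored `n`-ball around `x` is special. -/
def IsSpecial {V A : Type*} (T : SimpleGraph V) (φ : V → A) (n : ℕ) (x : V) : Prop :=
  ∃ y z : V, BallEquiv T φ n x y ∧ BallEquiv T φ n x z ∧ ¬ BallEquiv T φ (n + 1) y z

/-- The type set of a vertex. -/
def TypeSet {V A : Type*} (T : SimpleGraph V) (φ : V → A) (x : V) : Set ℕ :=
  {n : ℕ | IsSpecial T φ n x}

/-- The maximal type of a vertex of bounded type (`-1` if the type set is empty). -/
noncomputable def maxType {V A : Type*} (T : SimpleGraph V) (φ : V → A) (x : V) : ℤ :=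
  sSup (insert (-1) ((fun n : ℕ => (n : ℤ)) '' TypeSet T φ x))

/-- The coloring is Sturmian if its subword complexity is `n + 2`. -/
def IsSturmian {V A : Type*} (T : SimpleGraph V) (φ : V → A) : Prop :=
  ∀ n : ℕ, ballComplexity T φ n = n + 2

/-- Eventually periodic coloring. -/
def IsEventuallyPeriodic {V A : Type*} (T : SimpleGraph V) (φ : V → A) : Prop :=
  ∃ K : Set V, K.Nonempty ∧ K.Finite ∧ (T.induce K).Connected ∧
    ∀ v : (Kᶜ : Set V), ∃ ψ : V → A, IsPeriodicColoring T ψ ∧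
      ∀ w : (Kᶜ : Set V), (T.induce (Kᶜ : Set V)).Reachable v w → ψ (w : V) = φ (w : V)

/-- The vertex set of the `n`-branch from `x` towards its neighbor `x'`. -/
def branchSet {V : Type*} (T : SimpleGraph V) (n : ℕ) (x x' : V) : Set V :=
  insert x {y : V | T.dist x y ≤ n ∧ T.dist y x' < T.dist y x}

/-- Equivalence of colored `n`-branches. -/
def BranchEquiv {V A : Type*} (T : SimpleGraph V) (φ : V → A) (n : ℕ)
    (x x' y y' : V) : Prop :=
  ∃ f : (branchSet T n x x') ≃ (branchSet T n y y'),
    ((f ⟨x, Set.mem_insert x _⟩ : (branchSet T n y y')) : V) = y ∧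
    (∀ u w : (branchSet T n x x'), T.Adj (u : V) (w : V) ↔ T.Adj (f u : V) (f w : V)) ∧
    ∀ v : (branchSet T n x x'), φ (f v : V) = φ (v : V)

/-- A coloring of `K` appears exactly once if the only connected subgraph of `T`
color-isomorphic to it is `K` itself. -/
def AppearsOnce {V A : Type*} (T : SimpleGraph V) (φ : V → A) (K : Set V) : Prop :=
  ∀ K' : Set V, (T.induce K').Connected →
    (∃ f : K ≃ K', (∀ u w : K, T.Adj (u : V) (w : V) ↔ T.Adj (f u : V) (f w : V)) ∧
      ∀ v : K, φ (f v : V) = φ (v : V)) → K' = K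

section Aux

variable {V A : Type*} {T : SimpleGraph V} {φ : V → A}

/-- A color/adjacency-preserving bijection preserves distances. -/
lemma aux_dist_equiv (hconn : T.Connected) (g : V ≃ V)
    (hg : ∀ u w : V, T.Adj (g u) (g w) ↔ T.Adj u w) (u w : V) :
    T.dist (g u) (g w) = T.dist u w := by
  have key : ∀ (e : V ≃ V), (∀ a b : V, T.Adj (e a) (e b) ↔ T.Adj a b) →
      ∀ a b : V, T.dist (e a) (e b) ≤ T.dist a b := by
    intro e he a b
    obtain ⟨p, hp⟩ := (hconn a b).exists_walk_length_eq_dist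
    let f : T →g T := ⟨e, fun h => (he _ _).mpr h⟩
    have h1 : T.dist (f a) (f b) ≤ (p.map f).length := SimpleGraph.dist_le _
    rw [SimpleGraph.Walk.length_map, hp] at h1
    exact h1
  refine le_antisymm (key g hg u w) ?_
  have hg' : ∀ a b : V, T.Adj (g.symm a) (g.symm b) ↔ T.Adj a b := by
    intro a b
    conv_rhs => rw [← g.apply_symm_apply a, ← g.apply_symm_apply b]
    exact (hg _ _).symm
  have := key g.symm hg' (g u) (g w)
  simpa using this

/-- Balls are finite in a connected locally finite graph. -/
lemma aux_ball_finite (hconn : T.Connected) (hfin : ∀ v : V, (T.neighborSet v).Finite)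
    (u : V) (n : ℕ) : {v : V | T.dist u v ≤ n}.Finite := by
  induction n with
  | zero =>
    refine (Set.finite_singleton u).subset ?_
    intro v hv
    have h0 : T.dist u v = 0 := Nat.le_zero.mp hv
    have := (hconn.dist_eq_zero_iff (u := u) (v := v)).mp h0
    simp [this.symm]
  | succ n ih =>
    refine ((ih.union (Set.Finite.biUnion ih fun w _ => hfin w))).subset ?_
    intro v hv
    rcases le_or_gt (T.dist u v) n with h | h
    · exact Or.inl h
    · have hd : T.dist u v = n + 1 := le_antisymm hv h
      obtain ⟨p, hp⟩ := (hconn u v).exists_walk_length_eq_dist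
      rw [hd] at hp
      cases hq : p.reverse with
      | nil =>
        exfalso
        have := congrArg SimpleGraph.Walk.length hq
        rw [SimpleGraph.Walk.length_reverse, hp] at this
        simp at this
      | @cons _ c _ h' q =>
        refine Or.inr ?_
        have hlen : q.length = n := by
          have := congrArg SimpleGraph.Walk.length hq
          rw [SimpleGraph.Walk.length_reverse, hp] at this
          simpa using this.symm
        have hdc : T.dist u c ≤ n := by
          calc T.dist u c ≤ q.reverse.length := SimpleGraph.dist_le _
            _ = q.length := SimpleGraph.Walk.length_reverse _
            _ = n := hlen
        exact Set.mem_biUnion hdc h'.symm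

lemma aux_ballequiv_refl (n : ℕ) (x : V) : BallEquiv T φ n x x :=
  ⟨Equiv.refl _, rfl, fun _ _ => Iff.rfl, fun _ => rfl⟩

lemma aux_ballequiv_trans {n : ℕ} {x y z : V} (h1 : BallEquiv T φ n x y)
    (h2 : BallEquiv T φ n y z) : BallEquiv T φ n x z := by
  obtain ⟨f, hfc, hfa, hfφ⟩ := h1
  obtain ⟨f', hfc', hfa', hfφ'⟩ := h2
  refine ⟨f.trans f', ?_, ?_, ?_⟩
  · have : f ⟨x, by simp [SimpleGraph.dist_self]⟩ = ⟨y, by simp [SimpleGraph.dist_self]⟩ :=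
      Subtype.ext hfc
    simp only [Equiv.trans_apply, this]
    exact hfc'
  · intro u w
    exact (hfa u w).trans (hfa' (f u) (f w))
  · intro v
    simp only [Equiv.trans_apply]
    exact (hfφ' (f v)).trans (hfφ v)

/-- An adjacency-preserving bijection that preserves colors on a ball gives a ball
equivalence. -/
lemma aux_ballequiv_of_equiv (hconn : T.Connected) (g : V ≃ V)
    (hg : ∀ u w : V, T.Adj (g u) (g w) ↔ T.Adj u w) {n : ℕ} (x : V)
    (hc : ∀ w : V, T.dist x w ≤ n → φ (g w) = φ w) : BallEquiv T φ n x (g x) := by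
  have hdist : ∀ w : V, T.dist x w ≤ n ↔ T.dist (g x) (g w) ≤ n := by
    intro w; rw [aux_dist_equiv hconn g hg]
  refine ⟨Equiv.subtypeEquiv g hdist, rfl, ?_, ?_⟩
  · intro u w
    exact (hg u w).symm
  · intro v
    exact hc v v.2

/-- The relation of being in the same orbit of a subgroup of permutations is an
equivalence relation. -/
lemma aux_orbit_equivalence (Γ : Subgroup (Equiv.Perm V)) :
    Equivalence (fun x y : V => ∃ γ ∈ Γ, γ x = y) := by
  refine ⟨fun x => ⟨1, Γ.one_mem, rfl⟩, ?_, ?_⟩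
  · rintro x y ⟨γ, hγ, rfl⟩
    exact ⟨γ⁻¹, Γ.inv_mem hγ, γ.symm_apply_apply x⟩
  · rintro x y z ⟨γ, hγ, rfl⟩ ⟨δ, hδ, rfl⟩
    exact ⟨δ * γ, Γ.mul_mem hδ hγ, rfl⟩

/-- A walk whose support lies in `s` gives reachability in the induced graph. -/
lemma aux_reach_in {s : Set V} {a b : V} (p : T.Walk a b)
    (hs : ∀ z ∈ p.support, z ∈ s) :
    (T.induce s).Reachable ⟨a, hs a p.start_mem_support⟩ ⟨b, hs b p.end_mem_support⟩ := by
  induction p with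
  | nil => exact SimpleGraph.Reachable.refl _
  | @cons a c d h q ih =>
    have ha : a ∈ s := hs a (SimpleGraph.Walk.start_mem_support _)
    have hq : ∀ z ∈ q.support, z ∈ s := fun z hz => hs z (by
      rw [SimpleGraph.Walk.support_cons]; exact List.mem_cons_of_mem _ hz)
    have hadj : (T.induce s).Adj ⟨a, ha⟩ ⟨c, hq c q.start_mem_support⟩ := by
      simpa using h
    exact hadj.reachable.trans (ih hq)

/-- A vertex deep inside the complement of `K` has its whole `n`-ball reachable
within the complement. -/
lemma aux_deep_ball (hconn : T.Connected) {K : Set V} {n : ℕ} {v w : V}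
    (hdeep : ∀ u ∈ K, n < T.dist v u) (hw : T.dist v w ≤ n) :
    ∃ (hv : v ∈ (Kᶜ : Set V)) (hw' : w ∈ (Kᶜ : Set V)),
      (T.induce (Kᶜ : Set V)).Reachable ⟨v, hv⟩ ⟨w, hw'⟩ := by
  classical
  have hv : v ∈ (Kᶜ : Set V) := by
    intro hvK
    have := hdeep v hvK
    simp [SimpleGraph.dist_self] at this
  obtain ⟨p, hp⟩ := (hconn v w).exists_walk_length_eq_dist
  have hsupp : ∀ z ∈ p.support, z ∈ (Kᶜ : Set V) := by
    intro z hz hzK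
    have h1 : T.dist v z ≤ p.length := by
      calc T.dist v z ≤ (p.takeUntil z hz).length := SimpleGraph.dist_le _
        _ ≤ p.length := SimpleGraph.Walk.length_takeUntil_le p hz
    rw [hp] at h1
    exact absurd (h1.trans hw) (not_le.mpr (hdeep z hzK))
  exact ⟨hv, hsupp w p.end_mem_support, aux_reach_in p hsupp⟩

/-- Every vertex of the complement of a nonempty `K` reaches (within the complement)
a vertex adjacent to `K`. -/
lemma aux_boundary_walk {K : Set V} {v u : V} (p : T.Walk v u) :
    ∀ (hv : v ∈ (Kᶜ : Set V)), u ∈ K →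
    ∃ w, ∃ hw : w ∈ (Kᶜ : Set V), (∃ u' ∈ K, T.Adj u' w) ∧
      (T.induce (Kᶜ : Set V)).Reachable ⟨v, hv⟩ ⟨w, hw⟩ := by
  induction p with
  | nil => intro hv hu; exact absurd hu hv
  | @cons a c d h q ih =>
    intro hv hu
    by_cases hc : c ∈ K
    · exact ⟨a, hv, ⟨c, hc, h.symm⟩, SimpleGraph.Reachable.refl _⟩
    · obtain ⟨w, hw, hb, hr⟩ := ih hc hu
      have hadj : (T.induce (Kᶜ : Set V)).Adj ⟨a, hv⟩ ⟨c, hc⟩ := by simpa using h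
      exact ⟨w, hw, hb, hadj.reachable.trans hr⟩

end Aux

section Aux2

variable {V A : Type*} {T : SimpleGraph V} {φ : V → A}

/-- Two deep vertices in the region where `φ` agrees with a periodic coloring `ψ`,
lying in the same `Γ`-orbit, have equivalent `n`-balls. -/
lemma aux_deep_orbit (hconn : T.Connected) {K : Set V} {n : ℕ} {b : V}
    (hb : b ∈ (Kᶜ : Set V)) (ψ : V → A) (Γ : Subgroup (Equiv.Perm V))
    (hΓadj : ∀ γ ∈ Γ, ∀ u w : V, T.Adj (γ u) (γ w) ↔ T.Adj u w)
    (hΓcol : ∀ γ ∈ Γ, ∀ v : V, ψ (γ v) = ψ v)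
    (hag : ∀ w : ((Kᶜ : Set V) : Set V),
      (T.induce (Kᶜ : Set V)).Reachable ⟨b, hb⟩ w → ψ (w : V) = φ (w : V))
    {v v' : V} (hv : ∀ u ∈ K, n < T.dist v u) (hv' : ∀ u ∈ K, n < T.dist v' u)
    (hrv : ∃ h : v ∈ (Kᶜ : Set V), (T.induce (Kᶜ : Set V)).Reachable ⟨b, hb⟩ ⟨v, h⟩)
    (hrv' : ∃ h : v' ∈ (Kᶜ : Set V), (T.induce (Kᶜ : Set V)).Reachable ⟨b, hb⟩ ⟨v', h⟩)
    (γ : Equiv.Perm V) (hγ : γ ∈ Γ) (hγv : γ v = v') :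
    BallEquiv T φ n v v' := by
  obtain ⟨hvc, hrb⟩ := hrv
  obtain ⟨hvc', hrb'⟩ := hrv'
  have hadj := hΓadj γ hγ
  have key : BallEquiv T φ n v (γ v) := by
    refine aux_ballequiv_of_equiv hconn (γ : V ≃ V) hadj v ?_
    intro w hw
    obtain ⟨_, hwc, hreach⟩ := aux_deep_ball hconn hv hw
    have h1 : ψ w = φ w := hag ⟨w, hwc⟩ (hrb.trans hreach)
    have hw2 : T.dist v' (γ w) ≤ n := by
      rw [← hγv, aux_dist_equiv hconn (γ : V ≃ V) hadj]
      exact hw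
    obtain ⟨_, hwc2, hreach2⟩ := aux_deep_ball hconn hv' hw2
    have h2 : ψ (γ w) = φ (γ w) := hag ⟨γ w, hwc2⟩ (hrb'.trans hreach2)
    rw [← h2, ← h1]
    exact hΓcol γ hγ w
  rwa [hγv] at key

end Aux2

theorem stmt_15 {V A : Type*} (T : SimpleGraph V) (φ : V → A) (k : ℕ)
    (hk : 2 ≤ k) (htree : T.IsTree) (hreg : ∀ v : V, (T.neighborSet v).ncard = k)
    (hst : IsSturmian T φ) (hep : IsEventuallyPeriodic T φ) (x : V) :
    {y : V | SameClass T φ x y}.Finite := by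
  classical
  have hconn : T.Connected := htree.isConnected
  have hnfin : ∀ v : V, (T.neighborSet v).Finite := by
    intro v
    by_contra h
    have h0 : (T.neighborSet v).ncard = 0 := Set.Infinite.ncard h
    rw [hreg v] at h0
    omega
  obtain ⟨K, hKne, hKfin, _hKconn, hψ⟩ := hep
  -- The (finite) set of vertices outside `K` adjacent to `K`.
  set B : Set V := {w : V | w ∈ (Kᶜ : Set V) ∧ ∃ u ∈ K, T.Adj u w} with hBdef
  have hBfin : B.Finite := by
    refine (hKfin.biUnion (fun u _ => hnfin u)).subset ?_
    rintro w ⟨-, u, hu, hadj⟩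
    exact Set.mem_biUnion hu hadj
  haveI hBsub : Finite ↥B := hBfin.to_subtype
  choose Ψ hΨper hΨag using fun b : ↥B => hψ ⟨(b : V), b.2.1⟩
  choose Γ hΓadj hΓcol hΓfin using fun b : ↥B => hΨper b
  haveI : ∀ b : ↥B, Finite (Quot fun x y : V => ∃ γ ∈ Γ b, γ x = y) := hΓfin
  set N := Nat.card (Σ b : ↥B, Quot fun x y : V => ∃ γ ∈ Γ b, γ x = y) with hNdef
  set n := N with hndef
  have hcard := hst n
  simp only [ballComplexity] at hcard
  haveI hQfin : Finite (Quot (BallEquiv T φ n)) := Nat.finite_of_card_ne_zero (by omega)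
  -- There is a ball class all of whose centers are within distance `n` of `K`.
  have hexq : ∃ u₀ : V, ∀ u : V, BallEquiv T φ n u₀ u → ∃ w ∈ K, T.dist u w ≤ n := by
    by_contra hcon
    push_neg at hcon
    choose rep hrepEq hrepDeep using fun u₀ : V => hcon u₀
    have hbdata : ∀ q : Quot (BallEquiv T φ n),
        ∃ w, ∃ hw : w ∈ (Kᶜ : Set V), (∃ u' ∈ K, T.Adj u' w) ∧
          ∃ hv : rep q.out ∈ (Kᶜ : Set V),
            (T.induce (Kᶜ : Set V)).Reachable ⟨rep q.out, hv⟩ ⟨w, hw⟩ := by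
      intro q
      obtain ⟨u₁, hu₁⟩ := hKne
      have hdeep := hrepDeep q.out
      have hvc : rep q.out ∈ (Kᶜ : Set V) := by
        intro hmem
        have := hdeep _ hmem
        simp [SimpleGraph.dist_self] at this
      obtain ⟨p⟩ := hconn (rep q.out) u₁
      obtain ⟨w, hw, hbd, hr⟩ := aux_boundary_walk p hvc hu₁
      exact ⟨w, hw, hbd, hvc, hr⟩
    choose bw hbw hbbd hbvc hbreach using hbdata
    set f : Quot (BallEquiv T φ n) → Σ b : ↥B, Quot fun x y : V => ∃ γ ∈ Γ b, γ x = y :=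
      fun q => ⟨⟨bw q, hbw q, hbbd q⟩, Quot.mk _ (rep q.out)⟩ with hfdef
    have hinj : Function.Injective f := by
      intro q q' hqq
      simp only [hfdef] at hqq
      obtain ⟨h1, h2⟩ := Sigma.mk.inj_iff.mp hqq
      rw [← h1] at h2
      have heq := eq_of_heq h2
      obtain ⟨γ, hγ, hγv⟩ :=
        ((aux_orbit_equivalence (Γ ⟨bw q, hbw q, hbbd q⟩)).eqvGen_iff).mp
          (Quot.eqvGen_exact heq)
      have hbeq : bw q' = bw q := congrArg Subtype.val h1.symm
      have hsub : (⟨bw q', hbw q'⟩ : ↥(Kᶜ : Set V)) = ⟨bw q, hbw q⟩ := Subtype.ext hbeq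
      have hr' := (hbreach q').symm
      rw [hsub] at hr'
      have hBE : BallEquiv T φ n (rep q.out) (rep q'.out) := by
        refine aux_deep_orbit hconn (hbw q) (Ψ ⟨bw q, hbw q, hbbd q⟩)
          (Γ ⟨bw q, hbw q, hbbd q⟩) (hΓadj _) (hΓcol _) (hΨag ⟨bw q, hbw q, hbbd q⟩)
          (hrepDeep q.out) (hrepDeep q'.out)
          ⟨hbvc q, (hbreach q).symm⟩ ⟨hbvc q', hr'⟩ γ hγ hγv
      calc q = Quot.mk _ q.out := (Quot.out_eq q).symm
        _ = Quot.mk _ (rep q.out) := Quot.sound (hrepEq q.out)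
        _ = Quot.mk _ (rep q'.out) := Quot.sound hBE
        _ = Quot.mk _ q'.out := (Quot.sound (hrepEq q'.out)).symm
        _ = q' := Quot.out_eq q'
    have hle : Nat.card (Quot (BallEquiv T φ n)) ≤ N := Nat.card_le_card_of_injective f hinj
    omega
  obtain ⟨u₀, hu₀⟩ := hexq
  have hFfin : {u : V | BallEquiv T φ n u₀ u}.Finite := by
    refine (hKfin.biUnion (fun w _ => aux_ball_finite hconn hnfin w n)).subset ?_
    intro u hu
    obtain ⟨w, hwK, hdw⟩ := hu₀ u hu
    exact Set.mem_biUnion hwK (by rwa [Set.mem_setOf_eq, SimpleGraph.dist_comm])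
  set M := hFfin.toFinset.sup (T.dist u₀) with hMdef
  refine (aux_ball_finite hconn hnfin x (2 * T.dist x u₀ + M)).subset ?_
  rintro y ⟨g, hgadj, hgx, hgcol⟩
  have hu₀F : u₀ ∈ {u : V | BallEquiv T φ n u₀ u} := aux_ballequiv_refl n u₀
  have hgu₀ : g u₀ ∈ {u : V | BallEquiv T φ n u₀ u} :=
    aux_ballequiv_trans hu₀F (aux_ballequiv_of_equiv hconn g hgadj u₀ (fun w _ => hgcol w))
  have hMg : T.dist u₀ (g u₀) ≤ M := Finset.le_sup (hFfin.mem_toFinset.mpr hgu₀)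
  show T.dist x y ≤ 2 * T.dist x u₀ + M
  have h1 : T.dist x y ≤ T.dist x u₀ + T.dist u₀ y := hconn.dist_triangle
  have h2 : T.dist u₀ y ≤ T.dist u₀ (g u₀) + T.dist (g u₀) y := hconn.dist_triangle
  have h3 : T.dist (g u₀) y = T.dist x u₀ := by
    rw [← hgx, aux_dist_equiv hconn g hgadj, SimpleGraph.dist_comm]
  omega
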